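/- (Abstract version of the torsion lower bound.) Let Λ = Z^{2g} ⊂ V = R^{2g}, let λ_0 ∈ (0,1], δ > 0, and suppose Λ⁺, Λ⁻ ≤ Λ are subgroups and V = V⁺ ⊕ V⁻ a direct sum decomposition of V with Λ^± ⊆ V^±, such that: (a) every nonzero element of Λ has norm ≥ ε_0 > 0 in a family of 'slice norms' ‖·‖_n (n = -N, …, N) that are pairwise comparable with uniform constant; (b) for v ∈ Λ⁺ + Λ⁻ with decomposition v = v⁺ + v⁻ one has ‖v^±‖_0 ≤ C λ_0^{-1/2} ‖v‖_0 (uniform transversality); and (c) ‖v⁺‖_{N-1} ≤ C λ_0^{-1/2}(1-δ)^N ‖v⁺‖_0 and ‖v⁻‖_{-N+1} ≤ C λ_0^{-1/2}(1-δ)^N ‖v⁻‖_0 (exponential decay). Then every nonzero v ∈ Λ⁺ + Λ⁻ satisfies ‖v‖_0 ≥ c λ_0 (1+δ)^N, and consequently #(Λ/(Λ⁺ + Λ⁻)) ≥ c' λ_0^{2g} (1+δ)^{2gN} for constants c, c' depending only on g, C, ε_0 and the norm comparability constants. -/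

import Mathlib

/-- Euclidean norm on `Fin n → ℝ`. -/
noncomputable def eNorm {n : ℕ} (v : Fin n → ℝ) : ℝ := Real.sqrt (∑ i, v i ^ 2)

/-- Coefficientwise inclusion of the integer lattice `ℤ^n` into `ℝ^n`. -/
def latInc {n : ℕ} (v : Fin n → ℤ) : Fin n → ℝ := fun i => (v i : ℝ)

lemma latInc_add {n : ℕ} (a b : Fin n → ℤ) : latInc (a + b) = latInc a + latInc b := by
  funext i; simp [latInc]

/-- Abstract version of the torsion homology lower bound: given slice norms `‖·‖_n`
(`|n| ≤ N`) satisfying (a) a uniform lower bound `ε₀` on nonzero integral classes,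
uniform comparability, (b) uniform transversality of the decomposition `V = V⁺ ⊕ V⁻` with
constant `C·λ₀^{-1/2}`, and (c) exponential decay of classes of `V⁺` (resp. `V⁻`) toward the
right (resp. left) end, every nonzero `v ∈ Λ⁺ + Λ⁻` satisfies `‖v‖₀ ≥ c·λ₀·(1+δ)^N`, and
`#(Λ/(Λ⁺+Λ⁻)) ≥ c'·λ₀^{2g}·(1+δ)^{2gN}`, with `c, c'` depending only on `g, C, ε₀, D`. -/
theorem abstract_torsion_lower_bound
    (g : ℕ) (hg : 0 < g) (C D ε0 : ℝ) (hC : 1 ≤ C) (hD : 1 ≤ D) (hε0 : 0 < ε0) :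
    ∃ c c' : ℝ, 0 < c ∧ 0 < c' ∧
      ∀ (N : ℕ) (lam0 δ : ℝ), 0 < lam0 → lam0 ≤ 1 → 0 < δ → δ < 1 →
      ∀ (Lp Lm : Submodule ℤ (Fin (2 * g) → ℤ))
        (Vp Vm : Submodule ℝ (Fin (2 * g) → ℝ)),
        IsCompl Vp Vm →
        (∀ v ∈ Lp, latInc v ∈ Vp) →
        (∀ v ∈ Lm, latInc v ∈ Vm) →
        ∀ Nrm : ℤ → (Fin (2 * g) → ℝ) → ℝ,
          -- (a) uniform lower bound for nonzero integral classes in every slice norm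
          (∀ n : ℤ, |n| ≤ (N : ℤ) → ∀ v : Fin (2 * g) → ℤ, v ≠ 0 → ε0 ≤ Nrm n (latInc v)) →
          -- the slice norms are pairwise comparable with uniform constant `D`,
          -- and `‖·‖₀` is comparable with the Euclidean norm
          (∀ m n : ℤ, |m| ≤ (N : ℤ) → |n| ≤ (N : ℤ) → ∀ v, Nrm m v ≤ D * Nrm n v) →
          (∀ v, D⁻¹ * eNorm v ≤ Nrm 0 v ∧ Nrm 0 v ≤ D * eNorm v) →
          -- (b) uniform transversality of `V = V⁺ ⊕ V⁻`
          (∀ (v vp vm : Fin (2 * g) → ℝ), vp ∈ Vp → vm ∈ Vm → v = vp + vm →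
            Nrm 0 vp ≤ C * (Real.sqrt lam0)⁻¹ * Nrm 0 v ∧
            Nrm 0 vm ≤ C * (Real.sqrt lam0)⁻¹ * Nrm 0 v) →
          -- (c) exponential decay of `V⁺` to the right and of `V⁻` to the left
          (∀ vp ∈ Vp,
            Nrm ((N : ℤ) - 1) vp ≤ C * (Real.sqrt lam0)⁻¹ * (1 - δ) ^ N * Nrm 0 vp) →
          (∀ vm ∈ Vm,
            Nrm (-(N : ℤ) + 1) vm ≤ C * (Real.sqrt lam0)⁻¹ * (1 - δ) ^ N * Nrm 0 vm) →
          (∀ v ∈ Lp ⊔ Lm, v ≠ 0 → c * lam0 * (1 + δ) ^ N ≤ Nrm 0 (latInc v)) ∧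
          (⌈c' * lam0 ^ (2 * g) * (1 + δ) ^ (2 * g * N)⌉₊ : Cardinal) ≤
            Cardinal.mk ((Fin (2 * g) → ℤ) ⧸ (Lp ⊔ Lm)) := by
  have hC0 : (0:ℝ) < C := lt_of_lt_of_le one_pos hC
  have hD0 : (0:ℝ) < D := lt_of_lt_of_le one_pos hD
  have hC2 : (0:ℝ) < C ^ 2 := pow_pos hC0 2
  have hgR : (0:ℝ) < (g:ℝ) := by exact_mod_cast hg
  have hsg : 0 < Real.sqrt (2 * (g:ℝ)) := Real.sqrt_pos.mpr (by linarith)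
  have hc : (0:ℝ) < ε0 / C ^ 2 := div_pos hε0 hC2
  have hden : (0:ℝ) < 2 * D * Real.sqrt (2 * (g:ℝ)) := by positivity
  refine ⟨ε0 / C ^ 2, (ε0 / C ^ 2 / (2 * D * Real.sqrt (2 * (g:ℝ)))) ^ (2 * g),
    hc, pow_pos (div_pos hc hden) _, ?_⟩
  intro N lam0 δ hl0 hl1 hδ hδ1 Lp Lm Vp Vm hcompl hLpV hLmV Nrm ha hcomp hNrm0 hTrans hDecP hDecM
  have key : ∀ v ∈ Lp ⊔ Lm, v ≠ 0 →
      ε0 / C ^ 2 * lam0 * (1 + δ) ^ N ≤ Nrm 0 (latInc v) := by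
    intro v hv hv0
    obtain ⟨a, haL, b, hbL, hab⟩ := Submodule.mem_sup.mp hv
    have hvab : latInc v = latInc a + latInc b := by rw [← hab, latInc_add]
    have hNv0 : 0 ≤ Nrm 0 (latInc v) :=
      le_trans (mul_nonneg (inv_nonneg.mpr hD0.le) (Real.sqrt_nonneg _)) (hNrm0 _).1
    rcases Nat.eq_zero_or_pos N with hN | hN
    · subst hN
      have h0 := ha 0 (by simp) v hv0
      have hle : ε0 / C ^ 2 ≤ ε0 := div_le_self hε0.le (by nlinarith)
      have : ε0 / C ^ 2 * lam0 ≤ ε0 / C ^ 2 := by nlinarith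
      simpa using le_trans (by linarith) h0
    · have h1N : (1:ℤ) ≤ (N:ℤ) := by exact_mod_cast hN
      have hP : (0:ℝ) < (1 - δ) ^ N := pow_pos (by linarith) N
      have hQ : (0:ℝ) < (1 + δ) ^ N := pow_pos (by linarith) N
      have hPQ : (1 - δ) ^ N * (1 + δ) ^ N ≤ 1 := by
        rw [← mul_pow]
        exact pow_le_one₀ (by nlinarith) (by nlinarith)
      have hsq : (Real.sqrt lam0)⁻¹ * (Real.sqrt lam0)⁻¹ = lam0⁻¹ := by
        rw [← mul_inv, Real.mul_self_sqrt hl0.le]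
      have hs0 : 0 < Real.sqrt lam0 := Real.sqrt_pos.mpr hl0
      have hKpos : (0:ℝ) ≤ C * (Real.sqrt lam0)⁻¹ * (1 - δ) ^ N := by positivity
      -- main estimate : in both cases we get
      have hmain : ε0 * lam0 ≤ C ^ 2 * ((1 - δ) ^ N * Nrm 0 (latInc v)) := by
        have step : ∀ w : Fin (2 * g) → ℤ,
            ε0 ≤ C * (Real.sqrt lam0)⁻¹ * (1 - δ) ^ N * Nrm 0 (latInc w) →
            Nrm 0 (latInc w) ≤ C * (Real.sqrt lam0)⁻¹ * Nrm 0 (latInc v) →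
            ε0 * lam0 ≤ C ^ 2 * ((1 - δ) ^ N * Nrm 0 (latInc v)) := by
          intro w h1 h2
          have h4 : ε0 ≤ C * (Real.sqrt lam0)⁻¹ * (1 - δ) ^ N *
              (C * (Real.sqrt lam0)⁻¹ * Nrm 0 (latInc v)) :=
            le_trans h1 (mul_le_mul_of_nonneg_left h2 hKpos)
          have heq : C * (Real.sqrt lam0)⁻¹ * (1 - δ) ^ N *
              (C * (Real.sqrt lam0)⁻¹ * Nrm 0 (latInc v)) =
              C ^ 2 * lam0⁻¹ * ((1 - δ) ^ N * Nrm 0 (latInc v)) := by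
            rw [← hsq]; ring
          have h5 : ε0 ≤ C ^ 2 * lam0⁻¹ * ((1 - δ) ^ N * Nrm 0 (latInc v)) := heq ▸ h4
          have h6 := mul_le_mul_of_nonneg_right h5 hl0.le
          have h7 : C ^ 2 * lam0⁻¹ * ((1 - δ) ^ N * Nrm 0 (latInc v)) * lam0 =
              C ^ 2 * ((1 - δ) ^ N * Nrm 0 (latInc v)) * (lam0⁻¹ * lam0) := by ring
          rwa [h7, inv_mul_cancel₀ hl0.ne', mul_one] at h6
        by_cases ha0 : a = 0
        · have hbv : b = v := by rw [← hab, ha0, zero_add]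
          have hbne : b ≠ 0 := hbv ▸ hv0
          have hNp : |(-(N:ℤ) + 1)| ≤ (N:ℤ) := by
            rw [abs_of_nonpos (by omega)]; omega
          refine step b (le_trans (ha _ hNp b hbne) (hDecM _ (hLmV b hbL))) ?_
          exact (hTrans (latInc v) (latInc a) (latInc b) (hLpV a haL) (hLmV b hbL) hvab).2
        · have hNm : |((N:ℤ) - 1)| ≤ (N:ℤ) := by
            rw [abs_of_nonneg (by omega)]; omega
          refine step a (le_trans (ha _ hNm a ha0) (hDecP _ (hLpV a haL))) ?_
          exact (hTrans (latInc v) (latInc a) (latInc b) (hLpV a haL) (hLmV b hbL) hvab).1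
      rw [div_mul_eq_mul_div, div_mul_eq_mul_div, div_le_iff₀ hC2]
      nlinarith [mul_le_mul_of_nonneg_right hmain hQ.le,
        mul_le_mul_of_nonneg_right hPQ (mul_nonneg hC2.le hNv0)]
  refine ⟨key, ?_⟩
  set B : ℝ := ε0 / C ^ 2 * lam0 * (1 + δ) ^ N with hBdef
  have hB : 0 < B := by
    exact mul_pos (mul_pos hc hl0) (pow_pos (by linarith) N)
  set x : ℝ := B / (2 * D) / Real.sqrt (2 * (g:ℝ)) with hxdef
  have hx0 : 0 ≤ x := le_of_lt (div_pos (div_pos hB (by linarith)) hsg)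
  set K : ℕ := ⌊x⌋₊ with hKdef
  set f : (Fin (2 * g) → Fin (K + 1)) → ((Fin (2 * g) → ℤ) ⧸ (Lp ⊔ Lm)) :=
    fun p => Submodule.Quotient.mk (fun i => ((p i : ℕ) : ℤ)) with hfdef
  have hinj : Function.Injective f := by
    intro p q hpq
    by_contra hne
    have hd : (fun i => ((p i : ℕ) : ℤ)) - (fun i => ((q i : ℕ) : ℤ)) ∈ Lp ⊔ Lm :=
      (Submodule.Quotient.eq _).mp hpq
    set d : Fin (2 * g) → ℤ :=
      (fun i => ((p i : ℕ) : ℤ)) - (fun i => ((q i : ℕ) : ℤ)) with hddef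
    have hdne : d ≠ 0 := by
      intro h0
      apply hne
      funext i
      have h1 := congrFun h0 i
      simp only [hddef, Pi.sub_apply, Pi.zero_apply, sub_eq_zero] at h1
      exact Fin.ext (by exact_mod_cast h1)
    have hBle := key d hd hdne
    have hcoord : ∀ i, latInc d i ^ 2 ≤ (K:ℝ) ^ 2 := by
      intro i
      have hpK : (p i : ℕ) ≤ K := Nat.lt_succ_iff.mp (p i).isLt
      have hqK : (q i : ℕ) ≤ K := Nat.lt_succ_iff.mp (q i).isLt
      have hp' : ((p i : ℕ) : ℝ) ≤ (K:ℝ) := by exact_mod_cast hpK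
      have hq' : ((q i : ℕ) : ℝ) ≤ (K:ℝ) := by exact_mod_cast hqK
      have hp0 : (0:ℝ) ≤ ((p i : ℕ) : ℝ) := Nat.cast_nonneg _
      have hq0 : (0:ℝ) ≤ ((q i : ℕ) : ℝ) := Nat.cast_nonneg _
      have habs : |latInc d i| ≤ (K:ℝ) := by
        simp only [latInc, hddef, Pi.sub_apply]
        rw [abs_le]
        push_cast
        constructor <;> linarith
      calc latInc d i ^ 2 = |latInc d i| ^ 2 := (sq_abs _).symm
        _ ≤ (K:ℝ) ^ 2 := pow_le_pow_left₀ (abs_nonneg _) habs 2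
    have hsum : (∑ i, latInc d i ^ 2) ≤ (2 * (g:ℝ)) * (K:ℝ) ^ 2 := by
      calc (∑ i, latInc d i ^ 2) ≤ ∑ _i : Fin (2 * g), (K:ℝ) ^ 2 :=
            Finset.sum_le_sum fun i _ => hcoord i
        _ = (2 * (g:ℝ)) * (K:ℝ) ^ 2 := by
            rw [Finset.sum_const, Finset.card_univ, Fintype.card_fin, nsmul_eq_mul]
            push_cast; ring
    have heN : eNorm (latInc d) ≤ Real.sqrt (2 * (g:ℝ)) * (K:ℝ) := by
      unfold eNorm
      calc Real.sqrt (∑ i, latInc d i ^ 2) ≤ Real.sqrt ((2 * (g:ℝ)) * (K:ℝ) ^ 2) :=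
            Real.sqrt_le_sqrt hsum
        _ = Real.sqrt (2 * (g:ℝ)) * (K:ℝ) := by
            rw [Real.sqrt_mul (by positivity), Real.sqrt_sq (by positivity)]
    have hNd : Nrm 0 (latInc d) ≤ D * (Real.sqrt (2 * (g:ℝ)) * (K:ℝ)) :=
      le_trans (hNrm0 _).2 (mul_le_mul_of_nonneg_left heN (by linarith))
    have hKx : (K:ℝ) ≤ x := Nat.floor_le hx0
    have hxx : Real.sqrt (2 * (g:ℝ)) * x = B / (2 * D) := by
      rw [hxdef, mul_comm, div_mul_cancel₀ _ hsg.ne']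
    have h6 : D * (Real.sqrt (2 * (g:ℝ)) * (K:ℝ)) ≤ D * (B / (2 * D)) := by
      apply mul_le_mul_of_nonneg_left _ (by linarith)
      rw [← hxx]
      exact mul_le_mul_of_nonneg_left hKx hsg.le
    have h7 : D * (B / (2 * D)) = B / 2 := by
      field_simp
    rw [h7] at h6
    linarith
  have hcard : (((K + 1) ^ (2 * g) : ℕ) : Cardinal) ≤
      Cardinal.mk ((Fin (2 * g) → ℤ) ⧸ (Lp ⊔ Lm)) := by
    have h := Cardinal.mk_le_of_injective hinj
    rwa [Cardinal.mk_fintype, Fintype.card_fun, Fintype.card_fin, Fintype.card_fin] at h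
  refine le_trans ?_ hcard
  have hnat : ⌈(ε0 / C ^ 2 / (2 * D * Real.sqrt (2 * (g:ℝ)))) ^ (2 * g) * lam0 ^ (2 * g) *
      (1 + δ) ^ (2 * g * N)⌉₊ ≤ (K + 1) ^ (2 * g) := by
    rw [Nat.ceil_le]
    have hxK1 : x < (K:ℝ) + 1 := Nat.lt_floor_add_one x
    have hLHS : (ε0 / C ^ 2 / (2 * D * Real.sqrt (2 * (g:ℝ)))) ^ (2 * g) * lam0 ^ (2 * g) *
        (1 + δ) ^ (2 * g * N) = x ^ (2 * g) := by
      rw [show (1 + δ) ^ (2 * g * N) = ((1 + δ) ^ N) ^ (2 * g) from by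
        rw [← pow_mul, mul_comm], ← mul_pow, ← mul_pow]
      congr 1
      rw [hxdef, hBdef]
      field_simp
    rw [hLHS]
    calc x ^ (2 * g) ≤ ((K:ℝ) + 1) ^ (2 * g) := pow_le_pow_left₀ hx0 hxK1.le _
      _ = (((K + 1) ^ (2 * g) : ℕ) : ℝ) := by push_cast; ring
  exact_mod_cast hnat
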